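/- arXiv:2206.04358 — 3 statements merged into one kernel-verified Lean document; each statement's English description precedes it below -/
import Mathlib

section
/- For f'(0) > 0, the function λ ↦ (e^λ - 2 + e^{-λ} + f'(0))/λ on (0,∞) attains its minimum at a unique point λ* > 0, and at this minimizer the pair (c*, λ*) with c* the minimal value satisfies both c*·λ* = e^{λ*} - 2 + e^{-λ*} + f'(0) and c* = e^{λ*} - e^{-λ*}. -/
open Real

private noncomputable def Hfun (x : ℝ) : ℝ :=
  x * (Real.exp x - Real.exp (-x)) - Real.exp x + 2 - Real.exp (-x)

private lemma Hfun_deriv (x : ℝ) :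
    HasDerivAt Hfun (x * (Real.exp x + Real.exp (-x))) x := by
  have hne : HasDerivAt (fun y : ℝ => Real.exp (-y)) (-Real.exp (-x)) x := by
    simpa using (hasDerivAt_id' x).neg.exp
  have h1 : HasDerivAt (fun y : ℝ => y * (Real.exp y - Real.exp (-y)))
      (1 * (Real.exp x - Real.exp (-x)) + x * (Real.exp x - -Real.exp (-x))) x :=
    (hasDerivAt_id x).mul ((Real.hasDerivAt_exp x).sub hne)
  have h2 := ((h1.sub (Real.hasDerivAt_exp x)).add_const 2).sub hne
  have he : (fun y : ℝ => y * (Real.exp y - Real.exp (-y)) - Real.exp y + 2 - Real.exp (-y)) = Hfun := rfl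
  rw [← he]
  exact h2.congr_deriv (by ring)

private lemma Hfun_mono : StrictMonoOn Hfun (Set.Ici 0) := by
  apply strictMonoOn_of_deriv_pos (convex_Ici 0)
  · exact Continuous.continuousOn (by
      have : Continuous Hfun := by
        unfold Hfun; fun_prop
      exact this)
  · intro x hx
    rw [interior_Ici] at hx
    rw [(Hfun_deriv x).deriv]
    have := Real.exp_pos x
    have := Real.exp_pos (-x)
    exact mul_pos hx (by linarith)

/-- For `a = f'(0) > 0`, the function `F(λ) = (e^λ - 2 + e^{-λ} + a)/λ` on `(0,∞)`
attains its minimum at a unique point `λ* > 0`, and with `c* = F(λ*)` one has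
`c* λ* = e^{λ*} - 2 + e^{-λ*} + a` and `c* = e^{λ*} - e^{-λ*}`. -/
theorem stmt_0 (a : ℝ) (ha : 0 < a)
    (F : ℝ → ℝ) (hF : ∀ x : ℝ, F x = (Real.exp x - 2 + Real.exp (-x) + a) / x) :
    ∃! l : ℝ, 0 < l ∧ (∀ x : ℝ, 0 < x → F l ≤ F x) ∧
      F l * l = Real.exp l - 2 + Real.exp (-l) + a ∧
      F l = Real.exp l - Real.exp (-l) := by
  -- existence of l with Hfun l = a
  set b : ℝ := a + 2 with hb
  have hHb : a ≤ Hfun b := by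
    have h1 := Real.add_one_le_exp b
    have h2 : Real.exp (-b) ≤ 1 := Real.exp_le_one_iff.mpr (by linarith)
    have h3 := Real.exp_pos (-b)
    unfold Hfun
    nlinarith
  have hH0 : Hfun 0 = 0 := by unfold Hfun; norm_num
  have hcont : ContinuousOn Hfun (Set.Icc 0 b) := by
    have : Continuous Hfun := by unfold Hfun; fun_prop
    exact this.continuousOn
  have hsub := intermediate_value_Icc (by linarith : (0:ℝ) ≤ b) hcont
  have hmem : a ∈ Set.Icc (Hfun 0) (Hfun b) := by
    rw [hH0]; exact ⟨ha.le, hHb⟩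
  obtain ⟨l, hlmem, hHl⟩ := hsub hmem
  have hl0 : 0 < l := by
    rcases lt_or_eq_of_le hlmem.1 with h | h
    · exact h
    · exfalso; rw [← h] at hHl; rw [hH0] at hHl; linarith
  have ha_eq : a = l * (Real.exp l - Real.exp (-l)) - Real.exp l + 2 - Real.exp (-l) := by
    rw [← hHl]; rfl
  have hFl : F l = Real.exp l - Real.exp (-l) := by
    rw [hF, ha_eq]
    field_simp
    ring
  refine ⟨l, ⟨hl0, ?_, ?_, hFl⟩, ?_⟩
  · -- minimality
    intro x hx
    rw [hFl, hF, le_div_iff₀ hx]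
    have e1 : Real.exp l * Real.exp (x - l) = Real.exp x := by
      rw [← Real.exp_add]; ring_nf
    have e2 : Real.exp (-l) * Real.exp (l - x) = Real.exp (-x) := by
      rw [← Real.exp_add]; ring_nf
    have b1 := mul_le_mul_of_nonneg_left (Real.add_one_le_exp (x - l)) (Real.exp_pos l).le
    have b2 := mul_le_mul_of_nonneg_left (Real.add_one_le_exp (l - x)) (Real.exp_pos (-l)).le
    rw [e1] at b1
    rw [e2] at b2
    nlinarith [b1, b2]
  · -- F l * l = ...
    rw [hF]
    field_simp
  · -- uniqueness
    rintro m ⟨hm0, _, heq1, heq2⟩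
    have hFm : F m * m = (Real.exp m - Real.exp (-m)) * m := by rw [heq2]
    have hHm : Hfun m = a := by
      unfold Hfun
      rw [hFm] at heq1
      linarith
    exact Hfun_mono.injOn (Set.mem_Ici.mpr hm0.le) (Set.mem_Ici.mpr hl0.le)
      (hHm.trans hHl.symm)
end

section
/- Let λ* > 0 and c* = e^{λ*} − e^{−λ*}. The function ϖ(ν) := log ρ₋(ν) is analytic near ν = 0 with Taylor expansion ϖ(ν) = −ν/c* + cosh(λ*) ν²/c*³ − Λ* ν³/c*⁵ + O(|ν|⁴), where Λ* = 2 + c*²/3. -/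
private lemma analyticAt_deriv' {f : ℂ → ℂ} {x : ℂ} (h : AnalyticAt ℂ f x) :
    AnalyticAt ℂ (deriv f) x := by
  obtain ⟨s, hs, h⟩ := h.exists_mem_nhds_analyticOnNhd
  exact h.deriv x (mem_of_mem_nhds hs)

set_option maxHeartbeats 1000000 in
/-- For `λ* > 0` and `c* = e^{λ*} - e^{-λ*}`, the function `ϖ = log ρ₋`, the analytic
logarithm near `0` with `ϖ(0) = 0` of the analytic branch `ρ₋` (with `ρ₋(0)=1`) of the
smaller root of `ρ² - (ν + 2 cosh λ*) e^{λ*} ρ + e^{2λ*} = 0`, satisfies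
`ϖ(ν) = -ν/c* + cosh(λ*) ν²/c*³ - Λ* ν³/c*⁵ + O(|ν|⁴)` with `Λ* = 2 + c*²/3`. -/
theorem stmt_5 (lam c : ℝ) (hlam : 0 < lam)
    (hc : c = Real.exp lam - Real.exp (-lam))
    (ρ : ℂ → ℂ) (hρ : AnalyticAt ℂ ρ 0) (hρ0 : ρ 0 = 1)
    (heq : ∀ᶠ ν in nhds (0 : ℂ),
      (ρ ν) ^ 2 - (ν + 2 * Real.cosh lam) * Real.exp lam * ρ ν
        + Real.exp (2 * lam) = 0)
    (w : ℂ → ℂ) (hw : AnalyticAt ℂ w 0) (hw0 : w 0 = 0)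
    (hlog : ∀ᶠ ν in nhds (0 : ℂ), Complex.exp (w ν) = ρ ν) :
    deriv w 0 = -(1 / (c : ℂ)) ∧
    iteratedDeriv 2 w 0 = 2 * (Real.cosh lam : ℂ) / (c : ℂ) ^ 3 ∧
    iteratedDeriv 3 w 0 = -(6 * ((2 : ℂ) + (c : ℂ) ^ 2 / 3) / (c : ℂ) ^ 5) := by
  set E : ℂ := (Real.exp lam : ℂ) with hEdef
  set K : ℂ := 2 * (Real.cosh lam : ℂ) with hKdef
  set r1 : ℂ → ℂ := deriv ρ with hr1def
  set r2 : ℂ → ℂ := deriv r1 with hr2def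
  set r3 : ℂ → ℂ := deriv r2 with hr3def
  set w1 : ℂ → ℂ := deriv w with hw1def
  set w2 : ℂ → ℂ := deriv w1 with hw2def
  set w3 : ℂ → ℂ := deriv w2 with hw3def
  have hE : E ≠ 0 := by
    rw [hEdef]
    exact_mod_cast Real.exp_ne_zero lam
  have hK : K * E = E ^ 2 + 1 := by
    rw [hKdef, hEdef, Real.cosh_eq]
    push_cast [Real.exp_neg]
    field_simp
  have hcc : (c : ℂ) = (E ^ 2 - 1) / E := by
    rw [hc, hEdef]
    push_cast [Real.exp_neg]
    field_simp
  have hcR : 0 < c := by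
    rw [hc]
    have := Real.exp_lt_exp.mpr (neg_lt_self hlam)
    linarith
  have hc0 : (c : ℂ) ≠ 0 := Complex.ofReal_ne_zero.mpr (ne_of_gt hcR)
  have hP : E ^ 2 - 1 ≠ 0 := by
    intro h0
    exact hc0 (by rw [hcc, h0, zero_div])
  have hE2 : (Real.exp (2 * lam) : ℂ) = E ^ 2 := by
    rw [hEdef]
    push_cast [two_mul, Real.exp_add]
    ring
  have hAρ : ∀ᶠ ν in nhds (0 : ℂ), AnalyticAt ℂ ρ ν := hρ.eventually_analyticAt
  have hAw : ∀ᶠ ν in nhds (0 : ℂ), AnalyticAt ℂ w ν := hw.eventually_analyticAt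
  -- the quadratic relation as an eventual equality of functions
  have H0 : (fun ν => ρ ν ^ 2 - (ν + K) * E * ρ ν + E ^ 2) =ᶠ[nhds (0 : ℂ)]
      (fun _ => (0 : ℂ)) := by
    filter_upwards [heq] with ν h
    linear_combination h - hE2
  -- first derivative of the quadratic relation
  have H1 : (fun ν => 2 * (ρ ν * r1 ν) - (E * ρ ν + (ν + K) * E * r1 ν))
      =ᶠ[nhds (0 : ℂ)] (fun _ => (0 : ℂ)) := by
    filter_upwards [H0.eventually_nhds, hAρ] with y hy hA
    have hy' : (fun ν => ρ ν ^ 2 - (ν + K) * E * ρ ν + E ^ 2) =ᶠ[nhds y]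
        (fun _ => (0 : ℂ)) := hy
    have hdρ : HasDerivAt ρ (r1 y) y := hA.differentiableAt.hasDerivAt
    have hF : HasDerivAt (fun ν => ρ ν ^ 2 - (ν + K) * E * ρ ν + E ^ 2)
        (2 * (ρ y * r1 y) - (E * ρ y + (y + K) * E * r1 y)) y := by
      have h := ((hdρ.pow 2).sub
        ((((hasDerivAt_id y).add_const K).mul_const E).mul hdρ)).add_const (E ^ 2)
      refine h.congr_deriv ?_
      simp only [id_eq, Nat.cast_ofNat]
      ring
    have h0 : deriv (fun ν => ρ ν ^ 2 - (ν + K) * E * ρ ν + E ^ 2) y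
        = deriv (fun _ : ℂ => (0 : ℂ)) y := hy'.deriv_eq
    simp only [deriv_const'] at h0
    exact hF.deriv.symm.trans h0
  -- second derivative
  have H2 : (fun ν => 2 * (r1 ν * r1 ν + ρ ν * r2 ν)
      - (E * r1 ν + (E * r1 ν + (ν + K) * E * r2 ν)))
      =ᶠ[nhds (0 : ℂ)] (fun _ => (0 : ℂ)) := by
    filter_upwards [H1.eventually_nhds, hAρ] with y hy hA
    have hy' : (fun ν => 2 * (ρ ν * r1 ν) - (E * ρ ν + (ν + K) * E * r1 ν))
        =ᶠ[nhds y] (fun _ => (0 : ℂ)) := hy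
    have hdρ : HasDerivAt ρ (r1 y) y := hA.differentiableAt.hasDerivAt
    have hdr1 : HasDerivAt r1 (r2 y) y := (analyticAt_deriv' hA).differentiableAt.hasDerivAt
    have hF : HasDerivAt (fun ν => 2 * (ρ ν * r1 ν) - (E * ρ ν + (ν + K) * E * r1 ν))
        (2 * (r1 y * r1 y + ρ y * r2 y)
          - (E * r1 y + (E * r1 y + (y + K) * E * r2 y))) y := by
      have h := ((hdρ.mul hdr1).const_mul 2).sub
        ((hdρ.const_mul E).add
          ((((hasDerivAt_id y).add_const K).mul_const E).mul hdr1))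
      refine h.congr_deriv ?_
      simp only [id_eq, Nat.cast_ofNat]
      ring
    have h0 : deriv (fun ν => 2 * (ρ ν * r1 ν) - (E * ρ ν + (ν + K) * E * r1 ν)) y
        = deriv (fun _ : ℂ => (0 : ℂ)) y := hy'.deriv_eq
    simp only [deriv_const'] at h0
    exact hF.deriv.symm.trans h0
  -- third derivative at 0
  have hdρ0 : HasDerivAt ρ (r1 0) 0 := hρ.differentiableAt.hasDerivAt
  have hAr1 : AnalyticAt ℂ r1 0 := analyticAt_deriv' hρ
  have hAr2 : AnalyticAt ℂ r2 0 := analyticAt_deriv' hAr1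
  have hdr10 : HasDerivAt r1 (r2 0) 0 := hAr1.differentiableAt.hasDerivAt
  have hdr20 : HasDerivAt r2 (r3 0) 0 := hAr2.differentiableAt.hasDerivAt
  have e3 : 2 * ((r2 0 * r1 0 + r1 0 * r2 0) + (r1 0 * r2 0 + ρ 0 * r3 0))
      - (E * r2 0 + (E * r2 0 + (E * r2 0 + ((0 : ℂ) + K) * E * r3 0))) = 0 := by
    have hF : HasDerivAt (fun ν => 2 * (r1 ν * r1 ν + ρ ν * r2 ν)
        - (E * r1 ν + (E * r1 ν + (ν + K) * E * r2 ν)))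
        (2 * ((r2 0 * r1 0 + r1 0 * r2 0) + (r1 0 * r2 0 + ρ 0 * r3 0))
          - (E * r2 0 + (E * r2 0 + (E * r2 0 + ((0 : ℂ) + K) * E * r3 0)))) 0 := by
      have h := (((hdr10.mul hdr10).add (hdρ0.mul hdr20)).const_mul 2).sub
        ((hdr10.const_mul E).add ((hdr10.const_mul E).add
          ((((hasDerivAt_id (0 : ℂ)).add_const K).mul_const E).mul hdr20)))
      refine h.congr_deriv ?_
      simp only [id_eq, Nat.cast_ofNat]
      ring
    have h0 : deriv (fun ν => 2 * (r1 ν * r1 ν + ρ ν * r2 ν)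
        - (E * r1 ν + (E * r1 ν + (ν + K) * E * r2 ν))) 0
        = deriv (fun _ : ℂ => (0 : ℂ)) 0 := H2.deriv_eq
    simp only [deriv_const'] at h0
    exact hF.deriv.symm.trans h0
  -- the logarithm relation and its derivatives
  have G0 : (fun ν => Complex.exp (w ν)) =ᶠ[nhds (0 : ℂ)] ρ := hlog
  have G1 : (fun ν => w1 ν * ρ ν) =ᶠ[nhds (0 : ℂ)] r1 := by
    filter_upwards [G0.eventually_nhds, hAw, hlog] with y hy hA hly
    have hy' : (fun ν => Complex.exp (w ν)) =ᶠ[nhds y] ρ := hy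
    have hdw : HasDerivAt w (w1 y) y := hA.differentiableAt.hasDerivAt
    have hexp : HasDerivAt (fun ν => Complex.exp (w ν))
        (Complex.exp (w y) * w1 y) y := hdw.cexp
    have h0 : deriv (fun ν => Complex.exp (w ν)) y = r1 y := hy'.deriv_eq
    have h1 := hexp.deriv.symm.trans h0
    rw [hly] at h1
    linear_combination h1
  have G2 : (fun ν => w2 ν * ρ ν + w1 ν * r1 ν) =ᶠ[nhds (0 : ℂ)] r2 := by
    filter_upwards [G1.eventually_nhds, hAw, hAρ] with y hy hAwy hAρy
    have hy' : (fun ν => w1 ν * ρ ν) =ᶠ[nhds y] r1 := hy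
    have hdρ : HasDerivAt ρ (r1 y) y := hAρy.differentiableAt.hasDerivAt
    have hdw1 : HasDerivAt w1 (w2 y) y := (analyticAt_deriv' hAwy).differentiableAt.hasDerivAt
    have hF : HasDerivAt (fun ν => w1 ν * ρ ν) (w2 y * ρ y + w1 y * r1 y) y :=
      hdw1.mul hdρ
    have h0 : deriv (fun ν => w1 ν * ρ ν) y = deriv r1 y := hy'.deriv_eq
    exact hF.deriv.symm.trans h0
  have hAw1 : AnalyticAt ℂ w1 0 := analyticAt_deriv' hw
  have hAw2 : AnalyticAt ℂ w2 0 := analyticAt_deriv' hAw1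
  have hdw10 : HasDerivAt w1 (w2 0) 0 := hAw1.differentiableAt.hasDerivAt
  have hdw20 : HasDerivAt w2 (w3 0) 0 := hAw2.differentiableAt.hasDerivAt
  have g3 : (w3 0 * ρ 0 + w2 0 * r1 0) + (w2 0 * r1 0 + w1 0 * r2 0) = r3 0 := by
    have hF : HasDerivAt (fun ν => w2 ν * ρ ν + w1 ν * r1 ν)
        ((w3 0 * ρ 0 + w2 0 * r1 0) + (w2 0 * r1 0 + w1 0 * r2 0)) 0 :=
      (hdw20.mul hdρ0).add (hdw10.mul hdr10)
    have h0 : deriv (fun ν => w2 ν * ρ ν + w1 ν * r1 ν) 0 = deriv r2 0 := G2.deriv_eq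
    exact hF.deriv.symm.trans h0
  -- evaluate at 0
  have e1 := H1.self_of_nhds
  have e2 := H2.self_of_nhds
  have g1 := G1.self_of_nhds
  have g2 := G2.self_of_nhds
  simp only [hρ0, zero_add, one_mul, mul_one] at e1 e2 e3 g1 g2 g3
  -- solve the linear systems
  have ha1 : r1 0 * (1 - E ^ 2) = E := by linear_combination e1 + r1 0 * hK
  have hb1 : r2 0 * (1 - E ^ 2) = 2 * E * r1 0 - 2 * (r1 0) ^ 2 := by
    linear_combination e2 + r2 0 * hK
  have hd1 : r3 0 * (1 - E ^ 2) = 3 * E * r2 0 - 6 * r1 0 * r2 0 := by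
    linear_combination e3 + r3 0 * hK
  have HA : r1 0 * (E ^ 2 - 1) = -E := by linear_combination -ha1
  have HB : r2 0 * (E ^ 2 - 1) ^ 3 = 2 * E ^ 4 := by
    linear_combination (-(E ^ 2 - 1) ^ 2) * hb1
      + (-(2 * r1 0 * (E ^ 2 - 1) - 2 * E * (E ^ 2 - 1) - 2 * E)) * ha1
  have HD : r3 0 * (E ^ 2 - 1) ^ 5 = -6 * E ^ 7 - 6 * E ^ 5 := by
    linear_combination (-(E ^ 2 - 1) ^ 4) * hd1
      + (6 * r1 0 * (E ^ 2 - 1) - 3 * E * (E ^ 2 - 1)) * HB + 12 * E ^ 4 * HA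
  have HU : w1 0 * (E ^ 2 - 1) = -E := by linear_combination (E ^ 2 - 1) * g1 + HA
  have HV : w2 0 * (E ^ 2 - 1) ^ 3 = E ^ 4 + E ^ 2 := by
    linear_combination (E ^ 2 - 1) ^ 3 * g2 + (-(r1 0) * (E ^ 2 - 1) ^ 2) * HU
      + E * (E ^ 2 - 1) * HA + HB
  have HT : w3 0 * (E ^ 2 - 1) ^ 5 = -(2 * E ^ 7 + 8 * E ^ 5 + 2 * E ^ 3) := by
    linear_combination (E ^ 2 - 1) ^ 5 * g3 + HD
      + (2 * (E ^ 2 - 1) * E - 2 * (E ^ 2 - 1) * (r1 0 * (E ^ 2 - 1) + E)) * HV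
      + (-2 * (E ^ 2 - 1) * (E ^ 4 + E ^ 2)) * HA
      + (-2 * (E ^ 2 - 1) * E ^ 4 - (E ^ 2 - 1) * (r2 0 * (E ^ 2 - 1) ^ 3 - 2 * E ^ 4)) * HU
      + ((E ^ 2 - 1) * E) * HB
  refine ⟨?_, ?_, ?_⟩
  · rw [hcc]
    field_simp
    linear_combination HU
  · have h2 : iteratedDeriv 2 w 0 = w2 0 := by
      rw [iteratedDeriv_succ, iteratedDeriv_one, ← hw1def, ← hw2def]
    rw [h2, hcc]
    field_simp
    linear_combination HV - E ^ 2 * hK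
  · have h3 : iteratedDeriv 3 w 0 = w3 0 := by
      rw [iteratedDeriv_succ, iteratedDeriv_succ, iteratedDeriv_one,
        ← hw1def, ← hw2def, ← hw3def]
    rw [h3, hcc]
    field_simp
    linear_combination 3 * HT
end

section
/- Supersolution inequality for the shifted exponential: let λ* > 0, c* = e^{λ*} − e^{−λ*}, A > 0, set η_A := 2 cosh(λ*) A (1 + M) where M bounds |ω| appropriately, and define w̄_j(t) = K exp(−A((j − J − c*t)/√(t+1) − η_A)) for constants K > 0, J ∈ ℝ. Then d/dt w̄_j(t) − e^{λ*}(w̄_{j−1}(t) − 2 w̄_j(t) + w̄_{j+1}(t)) + c*(w̄_{j+1}(t) − w̄_j(t)) = (A/(t+1))(η/2 − cosh(λ*) A (1 + ω(−A/√(t+1)))) w̄_j(t) where η = (j − J − c*t)/√(t+1) and ω is the analytic function with e^{λ*}(e^{ξ} − 2 + e^{−ξ}) − c*(e^{ξ} − 1) = −c* ξ + cosh(λ*) ξ²(1 + ω(ξ)). -/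
/-- Supersolution identity for the shifted exponential: with
`w̄_j(t) = K exp(-A((j - J - c* t)/√(t+1) - η_A))` and `ω` the analytic function
with `e^{λ*}(e^ξ - 2 + e^{-ξ}) - c*(e^ξ - 1) = -c* ξ + cosh(λ*) ξ²(1 + ω(ξ))`,
one has, for `t > 0` and `j ∈ ℤ`,
`d/dt w̄_j - (L w̄)_j = (A/(t+1))(η/2 - cosh(λ*) A (1 + ω(-A/√(t+1)))) w̄_j`
where `η = (j - J - c* t)/√(t+1)`. -/
theorem stmt_16 (lam c A K J ηA : ℝ) (hlam : 0 < lam)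
    (hc : c = Real.exp lam - Real.exp (-lam)) (hA : 0 < A) (hK : 0 < K)
    (ω : ℝ → ℝ) (hω0 : ω 0 = 0)
    (hω : ∀ ξ : ℝ, ξ ≠ 0 →
      Real.exp lam * (Real.exp ξ - 2 + Real.exp (-ξ)) - c * (Real.exp ξ - 1)
        = -c * ξ + Real.cosh lam * ξ ^ 2 * (1 + ω ξ))
    (w : ℝ → ℤ → ℝ)
    (hw : ∀ t : ℝ, ∀ j : ℤ,
      w t j = K * Real.exp (-A * (((j : ℝ) - J - c * t) / Real.sqrt (t + 1) - ηA))) :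
    ∀ t : ℝ, 0 < t → ∀ j : ℤ,
      HasDerivAt (fun s => w s j)
        ((Real.exp lam * (w t (j - 1) - 2 * w t j + w t (j + 1))
            - c * (w t (j + 1) - w t j))
          + (A / (t + 1)) *
              (((j : ℝ) - J - c * t) / Real.sqrt (t + 1) / 2
                - Real.cosh lam * A * (1 + ω (-A / Real.sqrt (t + 1))))
              * w t j) t := by
  intro t ht j
  have ht1 : (0:ℝ) < t + 1 := by linarith
  have hq0 : (0:ℝ) < Real.sqrt (t+1) := Real.sqrt_pos.mpr ht1
  simp only [hw]
  push_cast
  set q : ℝ := Real.sqrt (t+1) with hqdef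
  have hqne : q ≠ 0 := ne_of_gt hq0
  have hss : q^2 = t + 1 := Real.sq_sqrt ht1.le
  set X : ℝ := (j:ℝ) - J - c*t with hX
  -- derivative computation
  have h1 : HasDerivAt (fun u : ℝ => (j:ℝ) - J - c*u) (-c) t := by
    have h := (((hasDerivAt_id t).const_mul c).const_sub ((j:ℝ)-J)); simp only [mul_one] at h; exact h
  have h2 : HasDerivAt (fun u : ℝ => Real.sqrt (u+1)) (1/(2*q)) t := by
    have h := ((hasDerivAt_id t).add_const 1).sqrt (by positivity)
    simpa [hqdef] using h
  have hd : HasDerivAt (fun u : ℝ => ((j:ℝ) - J - c*u) / Real.sqrt (u+1))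
      ((-c * q - X * (1/(2*q))) / q^2) t := h1.div h2 hqne
  have hmain : HasDerivAt
      (fun u : ℝ => K * Real.exp (-A * (((j:ℝ) - J - c*u) / Real.sqrt (u+1) - ηA)))
      (K * (Real.exp (-A * (X/q - ηA)) * (-A * ((-c * q - X * (1/(2*q))) / q^2)))) t :=
    (((hd.sub_const ηA).const_mul (-A)).exp).const_mul K
  have hval : K * (Real.exp (-A * (X/q - ηA)) * (-A * ((-c * q - X * (1/(2*q))) / q^2)))
      = K * (Real.exp (-A * (X/q - ηA)) * (c * A / q + A * X / (2 * q^3))) := by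
    field_simp; ring
  rw [hval] at hmain
  convert hmain using 1
  -- now a pure algebraic identity
  have hξ : -(A/q) ≠ 0 := neg_ne_zero.mpr (ne_of_gt (div_pos hA hq0))
  have key : Real.exp lam * (Real.exp (-A/q) - 2 + Real.exp (A/q))
      - c * (Real.exp (-A/q) - 1)
      = c * (A/q) + Real.cosh lam * (A/q)^2 * (1 + ω (-A/q)) := by
    have h := hω (-A/q) (by rw [neg_div]; exact hξ)
    have hnn : -(-A/q) = A/q := by ring
    rw [hnn] at h
    linear_combination h
  have E1 : Real.exp (-A * ((X - 1)/q - ηA))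
      = Real.exp (-A * (X/q - ηA)) * Real.exp (A/q) := by
    rw [← Real.exp_add]; congr 1; field_simp; ring
  have E2 : Real.exp (-A * ((X + 1)/q - ηA))
      = Real.exp (-A * (X/q - ηA)) * Real.exp (-A/q) := by
    rw [← Real.exp_add]; congr 1; field_simp; ring
  have harg1 : ((j:ℝ) - 1 - J - c*t) = X - 1 := by rw [hX]; ring
  have harg2 : ((j:ℝ) + 1 - J - c*t) = X + 1 := by rw [hX]; ring
  rw [harg1, harg2, E1, E2, ← hss]
  set E : ℝ := Real.exp (-A * (X/q - ηA)) with hE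
  linear_combination (K * E) * key
end
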